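/- Let u^1, …, u^N ∈ U be linearly independent, let v̄^i := P(T u^i), and define A ∈ ℝ^{N×N} by A_{ij} := b(u^i, v̄^j). If for every nonzero w_H in the span of u^1, …, u^N there exists v_h ∈ V_h with b(w_H, v_h) ≠ 0, then A is symmetric positive definite (xᵀAx > 0 for every nonzero x ∈ ℝ^N). -/

import Mathlib

open scoped RealInnerProductSpace
open Matrix

/-- If `u¹,…,u^N` are linearly independent, `v̄ⁱ := P(T uⁱ)`,
`A i j := b(uⁱ, v̄ʲ)`, and for every nonzero `w_H` in the span of the `uⁱ` there is
`v_h ∈ V_h` with `b(w_H, v_h) ≠ 0`, then `A` is symmetric positive definite: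
`xᵀAx > 0` for every nonzero `x ∈ ℝ^N`. -/
theorem stmt_8
    {U V : Type*} [NormedAddCommGroup U] [NormedSpace ℝ U]
    [NormedAddCommGroup V] [InnerProductSpace ℝ V]
    (B : U →L[ℝ] (V →L[ℝ] ℝ))
    (T : U → V) (hT : ∀ (w : U) (v : V), ⟪T w, v⟫ = B w v)
    (V_h : Submodule ℝ V) [V_h.HasOrthogonalProjection]
    (N : ℕ) (u : Fin N → U)
    (hli : LinearIndependent ℝ u)
    (vbar : Fin N → V)
    (hvbar : ∀ i, vbar i = (V_h.orthogonalProjectionOnto (T (u i)) : V))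
    (A : Matrix (Fin N) (Fin N) ℝ)
    (hA : ∀ i j, A i j = B (u i) (vbar j))
    (hnondeg : ∀ w_H ∈ Submodule.span ℝ (Set.range u), w_H ≠ 0 →
      ∃ v_h ∈ V_h, B w_H v_h ≠ 0) :
    A.IsSymm ∧ ∀ x : Fin N → ℝ, x ≠ 0 → 0 < x ⬝ᵥ A.mulVec x := by
  set q : Fin N → V := fun i => (V_h.orthogonalProjectionOnto (T (u i)) : V) with hq
  have hAq : ∀ i j, A i j = ⟪q i, q j⟫ := by
    intro i j
    rw [hA, hvbar, ← hT]
    have h0 : ⟪T (u i) - q i, q j⟫ = 0 := Submodule.starProjection_inner_eq_zero (K := V_h) (T (u i)) (q j)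
      (by rw [hq]; exact Submodule.coe_mem _)
    have := inner_sub_left (𝕜 := ℝ) (T (u i)) (q i) (q j)
    rw [h0] at this
    have hq' : (↑((V_h.orthogonalProjectionOnto) (T (u j))) : V) = q j := rfl
    rw [hq']
    linarith
  constructor
  · ext i j
    simp only [Matrix.transpose_apply, hAq]
    exact real_inner_comm _ _
  · intro x hx
    set w : U := ∑ i, x i • u i with hw
    -- T w equals the corresponding combination, at least projected
    set z : V := ∑ i, x i • q i with hz
    have hzw : ∀ v ∈ V_h, ⟪z, v⟫ = B w v := by
      intro v hv
      rw [hz, sum_inner, hw]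
      have : (B (∑ i, x i • u i)) v = ∑ i, x i * B (u i) v := by
        rw [map_sum]
        simp [ContinuousLinearMap.sum_apply]
      rw [this]
      refine Finset.sum_congr rfl fun i _ => ?_
      rw [real_inner_smul_left, hq]
      have h0 : ⟪T (u i) - q i, v⟫ = 0 := Submodule.starProjection_inner_eq_zero (K := V_h) (T (u i)) v hv
      have h1 := inner_sub_left (𝕜 := ℝ) (T (u i)) (q i) v
      rw [h0] at h1
      have h2 := hT (u i) v
      show x i * ⟪q i, v⟫ = x i * B (u i) v
      have : ⟪q i, v⟫ = B (u i) v := by linarith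
      rw [this]
    have hwne : w ≠ 0 := by
      intro h
      apply hx
      have := (Fintype.linearIndependent_iff.mp hli) x (by rw [← hw, h])
      funext i; exact this i
    have hwmem : w ∈ Submodule.span ℝ (Set.range u) := by
      refine Submodule.sum_mem _ fun i _ => Submodule.smul_mem _ _ ?_
      exact Submodule.subset_span ⟨i, rfl⟩
    obtain ⟨v_h, hvh, hBne⟩ := hnondeg w hwmem hwne
    have hzne : z ≠ 0 := by
      intro h
      apply hBne
      rw [← hzw v_h hvh, h, inner_zero_left]
    have hquad : x ⬝ᵥ A.mulVec x = ⟪z, z⟫ := by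
      rw [hz, inner_sum]
      simp only [dotProduct, Matrix.mulVec, dotProduct, Finset.mul_sum]
      rw [Finset.sum_comm]
      refine Finset.sum_congr rfl fun j _ => ?_
      rw [sum_inner]
      refine Finset.sum_congr rfl fun i _ => ?_
      rw [real_inner_smul_left, real_inner_smul_right, hAq]
      ring
    rw [hquad, real_inner_self_eq_norm_sq]
    exact pow_pos (norm_pos_iff.mpr hzne) 2
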